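/- Let Ω ⊆ ℝ² be open and connected, γ > 1, and let (m, p, ρ) be a C¹ solution of the steady full Euler equations on Ω with ρ > 0, p > 0, and m nowhere equal to the zero vector. If both the entropy quantity p/ρ^γ and the Bernoulli quantity |m|²/(2ρ²) + γp/((γ−1)ρ) are constant functions on Ω, then the velocity u = m/ρ is irrotational, i.e. ∂₂(m₁/ρ) − ∂₁(m₂/ρ) = 0 on Ω. -/

import Mathlib

open Set
open scoped ENNReal NNReal

noncomputable section

abbrev E2 : Type := EuclideanSpace ℝ (Fin 2)

/-- The point `(a, b)` of the Euclidean plane. -/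
def pt (a b : ℝ) : E2 := (WithLp.equiv 2 (Fin 2 → ℝ)).symm ![a, b]

/-- Partial derivative in the `i`-th coordinate direction. -/
def pd (i : Fin 2) (f : E2 → ℝ) : E2 → ℝ :=
  fun x => fderiv ℝ f x (EuclideanSpace.single i 1)

/-- Iterated mixed partial derivative `∂₁^{k₁} ∂₂^{k₂} f`. -/
def Dmix (k₁ k₂ : ℕ) (f : E2 → ℝ) : E2 → ℝ := (pd 0)^[k₁] ((pd 1)^[k₂] f)

/-- The steady full Euler equations on `Ω`: conservation of mass, the two momentum
equations, and conservation of energy, with `E = |m|²/(2ρ²) + p/((γ-1)ρ)`. -/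
def EulerEqs (γ : ℝ) (Ω : Set E2) (m₁ m₂ p ρ : E2 → ℝ) : Prop :=
  ∀ x ∈ Ω,
    pd 0 m₁ x + pd 1 m₂ x = 0 ∧
    pd 0 (fun y => m₁ y ^ 2 / ρ y) x + pd 1 (fun y => m₁ y * m₂ y / ρ y) x + pd 0 p x = 0 ∧
    pd 0 (fun y => m₁ y * m₂ y / ρ y) x + pd 1 (fun y => m₂ y ^ 2 / ρ y) x + pd 1 p x = 0 ∧
    pd 0 (fun y => m₁ y *
        ((m₁ y ^ 2 + m₂ y ^ 2) / (2 * ρ y ^ 2) + p y / ((γ - 1) * ρ y) + p y / ρ y)) x +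
      pd 1 (fun y => m₂ y *
        ((m₁ y ^ 2 + m₂ y ^ 2) / (2 * ρ y ^ 2) + p y / ((γ - 1) * ρ y) + p y / ρ y)) x = 0

section Helpers
variable {f g : E2 → ℝ} {x : E2} {i : Fin 2}

lemma pd_add (hf : DifferentiableAt ℝ f x) (hg : DifferentiableAt ℝ g x) :
    pd i (fun y => f y + g y) x = pd i f x + pd i g x := by
  unfold pd
  rw [fderiv_fun_add hf hg]
  simp

lemma pd_mul (hf : DifferentiableAt ℝ f x) (hg : DifferentiableAt ℝ g x) :
    pd i (fun y => f y * g y) x = f x * pd i g x + g x * pd i f x := by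
  unfold pd
  rw [fderiv_fun_mul hf hg]
  simp

lemma pd_const_mul (hf : DifferentiableAt ℝ f x) (c : ℝ) :
    pd i (fun y => c * f y) x = c * pd i f x := by
  unfold pd
  rw [fderiv_const_mul hf]
  simp

lemma pd_sq (hf : DifferentiableAt ℝ f x) :
    pd i (fun y => f y ^ 2) x = 2 * f x * pd i f x := by
  have h : (fun y => f y ^ 2) = fun y => f y * f y := by ext y; ring
  rw [h, pd_mul hf hf]; ring

lemma pd_div (hf : DifferentiableAt ℝ f x) (hg : DifferentiableAt ℝ g x) (h : g x ≠ 0) :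
    pd i (fun y => f y / g y) x = (pd i f x * g x - f x * pd i g x) / g x ^ 2 := by
  have hinv : HasFDerivAt (fun y => (g y)⁻¹) ((-(g x ^ 2)⁻¹) • fderiv ℝ g x) x := by
    exact
      (hasDerivAt_inv h).comp_hasFDerivAt x hg.hasFDerivAt
  have hd : HasFDerivAt (fun y => f y / g y)
      (f x • ((-(g x ^ 2)⁻¹) • fderiv ℝ g x) + (g x)⁻¹ • fderiv ℝ f x) x := by
    have := hf.hasFDerivAt.mul hinv; simp only [div_eq_mul_inv]; exact this
  unfold pd
  rw [hd.fderiv]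
  simp only [ContinuousLinearMap.add_apply, ContinuousLinearMap.smul_apply, smul_eq_mul]
  field_simp
  ring

lemma pd_rpow (γ : ℝ) (hf : DifferentiableAt ℝ f x) (h : f x ≠ 0) :
    pd i (fun y => f y ^ γ) x = γ * f x ^ (γ - 1) * pd i f x := by
  have hd := hf.hasFDerivAt.rpow_const (p := γ) (Or.inl h)
  unfold pd
  rw [hd.fderiv]
  simp [mul_assoc]

lemma diffAt_div (hf : DifferentiableAt ℝ f x) (hg : DifferentiableAt ℝ g x)
    (h : g x ≠ 0) : DifferentiableAt ℝ (fun y => f y / g y) x := by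
  simp only [div_eq_mul_inv]
  exact hf.mul (hg.inv h)

lemma pd_const_on {Ω : Set E2} (hΩ : IsOpen Ω) (hx : x ∈ Ω) (c : ℝ)
    (h : ∀ y ∈ Ω, f y = c) : pd i f x = 0 := by
  have he : f =ᶠ[nhds x] fun _ => c := Filter.eventually_of_mem (hΩ.mem_nhds hx) h
  unfold pd
  rw [he.fderiv_eq]
  simp

end Helpers

/-- Proposition 3.1 of the paper. If a `C¹` Euler flow with no
stagnation points has constant entropy `p/ρ^γ` and constant Bernoulli quantity
`|m|²/(2ρ²) + γp/((γ-1)ρ)` on a connected open set `Ω`, then the velocity `u = m/ρ`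
is irrotational. -/
theorem constant_farfield_implies_potential
    (γ : ℝ) (hγ : 1 < γ) (Ω : Set E2) (hΩ : IsOpen Ω) (hconn : IsConnected Ω)
    (m₁ m₂ p ρ : E2 → ℝ)
    (hm₁ : ContDiffOn ℝ 1 m₁ Ω) (hm₂ : ContDiffOn ℝ 1 m₂ Ω)
    (hp : ContDiffOn ℝ 1 p Ω) (hρ : ContDiffOn ℝ 1 ρ Ω)
    (hρpos : ∀ x ∈ Ω, 0 < ρ x) (hppos : ∀ x ∈ Ω, 0 < p x)
    (hstag : ∀ x ∈ Ω, (m₁ x, m₂ x) ≠ (0, 0))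
    (heuler : EulerEqs γ Ω m₁ m₂ p ρ)
    (hentropy : ∃ c : ℝ, ∀ x ∈ Ω, p x / ρ x ^ γ = c)
    (hbernoulli : ∃ c : ℝ, ∀ x ∈ Ω,
      (m₁ x ^ 2 + m₂ x ^ 2) / (2 * ρ x ^ 2) + γ * p x / ((γ - 1) * ρ x) = c) :
    ∀ x ∈ Ω, pd 1 (fun y => m₁ y / ρ y) x - pd 0 (fun y => m₂ y / ρ y) x = 0 := by
  obtain ⟨ce, hce⟩ := hentropy
  obtain ⟨cb, hcb⟩ := hbernoulli
  intro x hx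
  have hxn : Ω ∈ nhds x := hΩ.mem_nhds hx
  have dm1 : DifferentiableAt ℝ m₁ x := (hm₁.contDiffAt hxn).differentiableAt one_ne_zero
  have dm2 : DifferentiableAt ℝ m₂ x := (hm₂.contDiffAt hxn).differentiableAt one_ne_zero
  have dp : DifferentiableAt ℝ p x := (hp.contDiffAt hxn).differentiableAt one_ne_zero
  have dρ : DifferentiableAt ℝ ρ x := (hρ.contDiffAt hxn).differentiableAt one_ne_zero
  have hrpos := hρpos x hx
  have hr : ρ x ≠ 0 := hrpos.ne'
  have hγ1 : γ - 1 ≠ 0 := sub_ne_zero.mpr hγ.ne'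
  have hrg : ρ x ^ γ ≠ 0 := (Real.rpow_pos_of_pos hrpos γ).ne'
  have dρg : DifferentiableAt ℝ (fun y => ρ y ^ γ) x := dρ.rpow_const (Or.inl hr)
  -- entropy relation
  have hent : ∀ i : Fin 2, pd i p x * ρ x = γ * p x * pd i ρ x := by
    intro i
    have h0 : pd i (fun y => p y / ρ y ^ γ) x = 0 := pd_const_on hΩ hx ce hce
    rw [pd_div dp dρg hrg, pd_rpow γ dρ hr] at h0
    have hnum : pd i p x * ρ x ^ γ - p x * (γ * ρ x ^ (γ - 1) * pd i ρ x) = 0 :=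
      (div_eq_zero_iff.mp h0).resolve_right (pow_ne_zero 2 hrg)
    have hsplit : ρ x ^ γ = ρ x ^ (γ - 1) * ρ x := by
      rw [← Real.rpow_add_one hr]; norm_num
    have hrg1 : ρ x ^ (γ - 1) ≠ 0 := (Real.rpow_pos_of_pos hrpos _).ne'
    have h2 : pd i p x * ρ x * ρ x ^ (γ - 1) = γ * p x * pd i ρ x * ρ x ^ (γ - 1) := by
      linear_combination hnum - pd i p x * hsplit
    exact mul_right_cancel₀ hrg1 h2
  -- Bernoulli relation
  have hbern : ∀ i : Fin 2,
      (m₁ x * pd i m₁ x + m₂ x * pd i m₂ x) * ρ x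
        - (m₁ x ^ 2 + m₂ x ^ 2) * pd i ρ x + γ * p x * pd i ρ x * ρ x = 0 := by
    intro i
    have h0 : pd i (fun y =>
        (m₁ y ^ 2 + m₂ y ^ 2) / (2 * ρ y ^ 2) + γ * p y / ((γ - 1) * ρ y)) x = 0 :=
      pd_const_on hΩ hx cb hcb
    have d1 : DifferentiableAt ℝ (fun y => (m₁ y ^ 2 + m₂ y ^ 2) / (2 * ρ y ^ 2)) x :=
by
      apply diffAt_div ((dm1.fun_pow 2).fun_add (dm2.fun_pow 2)) ((dρ.fun_pow 2).const_mul 2)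
      positivity
    have d2 : DifferentiableAt ℝ (fun y => γ * p y / ((γ - 1) * ρ y)) x :=
by
      apply diffAt_div (dp.const_mul γ) (dρ.const_mul (γ - 1))
      exact mul_ne_zero hγ1 hr
    rw [pd_add d1 d2,
      pd_div ((dm1.fun_pow 2).fun_add (dm2.fun_pow 2)) ((dρ.fun_pow 2).const_mul 2) (show (2:ℝ) * ρ x ^ 2 ≠ 0 by positivity),
      pd_div (dp.const_mul γ) (dρ.const_mul (γ - 1)) (show (γ - 1) * ρ x ≠ 0 from mul_ne_zero hγ1 hr),
      pd_add (dm1.fun_pow 2) (dm2.fun_pow 2), pd_sq dm1, pd_sq dm2,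
      pd_const_mul (dρ.fun_pow 2) 2, pd_sq dρ,
      pd_const_mul dp γ, pd_const_mul dρ (γ - 1)] at h0
    have hP := hent i
    field_simp at h0
    refine mul_left_cancel₀ (a := 4 * (γ - 1) ^ 2 * ρ x ^ 3)
      (mul_ne_zero (mul_ne_zero (by norm_num) (pow_ne_zero 2 hγ1)) (pow_ne_zero 3 hr)) ?_
    rw [mul_zero]
    linear_combination 4 * (γ - 1) * ρ x ^ 3 * h0 - 4 * γ * (γ - 1) * ρ x ^ 4 * hP
  -- momentum equations
  obtain ⟨hmass, hmom1, hmom2, -⟩ := heuler x hx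
  rw [pd_div (dm1.fun_pow 2) dρ hr, pd_div (dm1.fun_mul dm2) dρ hr, pd_sq dm1,
    pd_mul dm1 dm2] at hmom1
  rw [pd_div (dm1.fun_mul dm2) dρ hr, pd_div (dm2.fun_pow 2) dρ hr, pd_sq dm2,
    pd_mul dm1 dm2] at hmom2
  field_simp at hmom1 hmom2
  have M1 : 2 * m₁ x * pd 0 m₁ x * ρ x - m₁ x ^ 2 * pd 0 ρ x
      + (m₁ x * pd 1 m₂ x + m₂ x * pd 1 m₁ x) * ρ x - m₁ x * m₂ x * pd 1 ρ x
      + pd 0 p x * ρ x ^ 2 = 0 := by linear_combination hmom1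
  have M2 : (m₁ x * pd 0 m₂ x + m₂ x * pd 0 m₁ x) * ρ x - m₁ x * m₂ x * pd 0 ρ x
      + 2 * m₂ x * pd 1 m₂ x * ρ x - m₂ x ^ 2 * pd 1 ρ x
      + pd 1 p x * ρ x ^ 2 = 0 := by linear_combination hmom2
  -- conclusion
  rw [pd_div dm1 dρ hr, pd_div dm2 dρ hr, div_sub_div_same, div_eq_zero_iff]
  left
  have hab := hstag x hx
  rcases eq_or_ne (m₁ x) 0 with ha | ha
  · have hb : m₂ x ≠ 0 := by
      intro hb; exact hab (by rw [ha, hb])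
    have key : m₂ x * (pd 1 m₁ x * ρ x - m₁ x * pd 1 ρ x
        - (pd 0 m₂ x * ρ x - m₂ x * pd 0 ρ x)) = m₂ x * 0 := by
      linear_combination M1 - hbern 0 - ρ x * hent 0 - m₁ x * ρ x * hmass
    exact mul_left_cancel₀ hb key
  · have key : m₁ x * (pd 1 m₁ x * ρ x - m₁ x * pd 1 ρ x
        - (pd 0 m₂ x * ρ x - m₂ x * pd 0 ρ x)) = m₁ x * 0 := by
      linear_combination -(M2 - hbern 1 - ρ x * hent 1 - m₂ x * ρ x * hmass)
    exact mul_left_cancel₀ ha key
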